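/- arXiv:2012.08735 — 2 statements merged into one kernel-verified Lean document; each statement's English description precedes it below -/
import Mathlib

section
/- For any function f : {-1,1}^n → {-1,1} and p ∈ (0,1), the score of coordinate i satisfies Score_i(f,p) = (p/2) · E_{x,y}[D_i f(x) · D_i f(y)], where y is a p-noisy copy of x and D_i f is the i-th discrete derivative of f. -/
open Finset

attribute [local instance] Classical.propDecidable

namespace DTR

noncomputable section

/-- ±1 real value of a Boolean. -/
def toR (b : Bool) : ℝ := if b then 1 else -1

/-- Average (expectation under the uniform distribution) of a real-valued
function on `{-1,1}^n` (encoded as `Fin n → Bool`). -/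
def avg (n : ℕ) (g : (Fin n → Bool) → ℝ) : ℝ := (∑ x : Fin n → Bool, g x) / 2 ^ n

/-- Mean `E[f]` of a ±1-valued Boolean function. -/
def mean (n : ℕ) (f : (Fin n → Bool) → Bool) : ℝ := avg n fun x => toR (f x)

/-- Sign of a real number, as ±1 (with sign(0) = 1). -/
def sgn (e : ℝ) : ℝ := if 0 ≤ e then 1 else -1

/-- Normalized Hamming distance `Pr_x[f(x) ≠ g(x)]` under the uniform distribution. -/
def distB (n : ℕ) (f g : (Fin n → Bool) → Bool) : ℝ :=
  avg n fun x => if f x = g x then 0 else 1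

/-- The `p`-noisy copy of `x` determined by the rerandomization pattern `r`
(coordinates where `r i = true` are rerandomized) and fresh bits `z`. -/
def noisy (n : ℕ) (x r z : Fin n → Bool) : Fin n → Bool := fun i => if r i then z i else x i

/-- Probability of the rerandomization pattern `r` at noise rate `p`. -/
def wt (n : ℕ) (p : ℝ) (r : Fin n → Bool) : ℝ := ∏ i : Fin n, (if r i then p else 1 - p)

/-- Noise sensitivity `NS_p(f) = Pr[f(x) ≠ f(y)]`, `x` uniform, `y` a `p`-noisy copy of `x`. -/
def NS (n : ℕ) (p : ℝ) (f : (Fin n → Bool) → Bool) : ℝ :=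
  (∑ x : Fin n → Bool, ∑ r : Fin n → Bool, ∑ z : Fin n → Bool,
      wt n p r * (if f x = f (noisy n x r z) then 0 else 1)) / (2 ^ n * 2 ^ n)

/-- Restriction `f_{x_i = b}` of `f`, fixing coordinate `i` to `b`. -/
def restr (n : ℕ) (f : (Fin n → Bool) → Bool) (i : Fin n) (b : Bool) :
    (Fin n → Bool) → Bool := fun x => f (Function.update x i b)

/-- `Score_i(f,p) = NS_p(f) − E_b[NS_p(f_{x_i=b})]`. -/
def score (n : ℕ) (p : ℝ) (f : (Fin n → Bool) → Bool) (i : Fin n) : ℝ :=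
  NS n p f - (NS n p (restr n f i true) + NS n p (restr n f i false)) / 2

/-- Discrete derivative `D_i g(x) = (g(x^{i=1}) − g(x^{i=-1}))/2` of a real-valued function. -/
def Dder (n : ℕ) (g : (Fin n → Bool) → ℝ) (i : Fin n) (x : Fin n → Bool) : ℝ :=
  (g (Function.update x i true) - g (Function.update x i false)) / 2

/-- `p`-smoothed version `f̃(x) = E_{y ∼_p x}[f(y)]` of a Boolean function `f`. -/
def smooth (n : ℕ) (p : ℝ) (f : (Fin n → Bool) → Bool) (x : Fin n → Bool) : ℝ :=
  (∑ r : Fin n → Bool, ∑ z : Fin n → Bool, wt n p r * toR (f (noisy n x r z))) / 2 ^ n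

/-- Fourier coefficient `f̂(S) = E[f(x) · χ_S(x)]`. -/
def fourier (n : ℕ) (f : (Fin n → Bool) → Bool) (S : Finset (Fin n)) : ℝ :=
  avg n fun x => toR (f x) * ∏ i ∈ S, toR (x i)

/-- Total influence `Inf(g) = Σ_i Pr[g(x) ≠ g(x^{⊕i})]`. -/
def totalInf (n : ℕ) (g : (Fin n → Bool) → Bool) : ℝ :=
  ∑ i : Fin n, avg n fun x => if g x = g (Function.update x i (!x i)) then 0 else 1

/-- Decision trees over `{-1,1}^n`. -/
inductive DTree (n : ℕ) where
  | leaf : Bool → DTree n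
  | node : Fin n → DTree n → DTree n → DTree n

namespace DTree

def eval {n : ℕ} : DTree n → (Fin n → Bool) → Bool
  | .leaf b, _ => b
  | .node i l r, x => if x i then eval r x else eval l x

/-- Number of leaves (the size of the tree). -/
def leaves {n : ℕ} : DTree n → ℕ
  | .leaf _ => 1
  | .node _ l r => leaves l + leaves r

/-- Depth of the leaf reached by input `x`. -/
def depthOn {n : ℕ} : DTree n → (Fin n → Bool) → ℕ
  | .leaf _, _ => 0
  | .node i l r, x => (if x i then depthOn r x else depthOn l x) + 1

/-- Whether the tree queries variable `i` on input `x`. -/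
def queries {n : ℕ} : DTree n → (Fin n → Bool) → Fin n → Bool
  | .leaf _, _, _ => false
  | .node j l r, x, i => (i == j) || (if x j then queries r x i else queries l x i)

/-- The tree never re-queries a variable already queried on the path
(given the set `s` of forbidden variables). -/
def noRepeat {n : ℕ} : DTree n → Finset (Fin n) → Prop
  | .leaf _, _ => True
  | .node i l r, s => i ∉ s ∧ noRepeat l (insert i s) ∧ noRepeat r (insert i s)

def depth {n : ℕ} : DTree n → ℕ
  | .leaf _ => 0
  | .node _ l r => max (depth l) (depth r) + 1

end DTree

/-- `opt_s(g)`: distance of `g` to the closest decision tree of size at most `s`. -/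
def opt (n : ℕ) (s : ℕ) (g : (Fin n → Bool) → Bool) : ℝ :=
  sInf {e : ℝ | ∃ T : DTree n, T.leaves ≤ s ∧ distB n g T.eval = e}


lemma upd_invol (n : ℕ) (i : Fin n) :
    Function.Involutive (fun x : Fin n → Bool => Function.update x i (!(x i))) := by
  intro x
  show Function.update (Function.update x i (!(x i))) i
      (!(Function.update x i (!(x i)) i)) = x
  simp [Function.update_idem]

lemma sum_update_bool (n : ℕ) (i : Fin n) (h : (Fin n → Bool) → ℝ) :
    ∑ x : Fin n → Bool, ∑ b : Bool, h (Function.update x i b)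
      = 2 * ∑ x : Fin n → Bool, h x := by
  have h1 : ∑ x : Fin n → Bool, h (Function.update x i (!(x i)))
      = ∑ x : Fin n → Bool, h x :=
    Equiv.sum_comp (Function.Involutive.toPerm _ (upd_invol n i)) h
  calc ∑ x : Fin n → Bool, ∑ b : Bool, h (Function.update x i b)
      = ∑ x : Fin n → Bool, (h (Function.update x i true) + h (Function.update x i false)) := by
        refine Finset.sum_congr rfl fun x _ => ?_
        exact Fintype.sum_bool _
    _ = ∑ x : Fin n → Bool, (h x + h (Function.update x i (!(x i)))) := by
        refine Finset.sum_congr rfl fun x _ => ?_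
        cases hx : x i
        · have hx' : Function.update x i false = x := by
            conv_lhs => rw [← hx]
            exact Function.update_eq_self i x
          rw [hx']
          simp [add_comm]
        · have hx' : Function.update x i true = x := by
            conv_lhs => rw [← hx]
            exact Function.update_eq_self i x
          rw [hx']
          simp
    _ = (∑ x : Fin n → Bool, h x) + ∑ x : Fin n → Bool, h (Function.update x i (!(x i))) :=
        Finset.sum_add_distrib
    _ = 2 * ∑ x : Fin n → Bool, h x := by rw [h1]; ring

set_option maxHeartbeats 1000000 in
lemma sum_wt (n : ℕ) (p : ℝ) : ∑ r : Fin n → Bool, wt n p r = 1 := by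
  unfold wt
  calc ∑ r : Fin n → Bool, ∏ i : Fin n, (if r i then p else 1 - p)
      = ∑ r ∈ Fintype.piFinset (fun _ : Fin n => (univ : Finset Bool)),
          ∏ i : Fin n, (if r i then p else 1 - p) := by rw [Fintype.piFinset_univ]
    _ = ∏ i : Fin n, ∑ b : Bool, (if b then p else 1 - p) :=
        (Finset.prod_univ_sum (fun _ : Fin n => (univ : Finset Bool))
          (fun _ b => if b = true then p else 1 - p)).symm
    _ = 1 := by simp

lemma noisy_update (n : ℕ) (i : Fin n) (x r z : Fin n → Bool) (bx br bz : Bool) :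
    noisy n (Function.update x i bx) (Function.update r i br) (Function.update z i bz)
      = Function.update (noisy n x r z) i (cond br bz bx) := by
  funext j
  rcases eq_or_ne j i with rfl | hj
  · simp [noisy]
  · simp [noisy, Function.update_of_ne hj]

lemma wt_update (n : ℕ) (p : ℝ) (i : Fin n) (r : Fin n → Bool) (b : Bool) :
    wt n p (Function.update r i b)
      = (cond b p (1 - p)) * ∏ j ∈ Finset.univ.erase i, (if r j then p else 1 - p) := by
  unfold wt
  rw [← Finset.mul_prod_erase _ _ (Finset.mem_univ i)]
  congr 1
  · cases b <;> simp
  · refine Finset.prod_congr rfl fun j hj => ?_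
    rw [Function.update_of_ne (Finset.ne_of_mem_erase hj)]

lemma expand3 (n : ℕ) (i : Fin n)
    (G : (Fin n → Bool) → (Fin n → Bool) → (Fin n → Bool) → ℝ) :
    8 * (∑ x : Fin n → Bool, ∑ r : Fin n → Bool, ∑ z : Fin n → Bool, G x r z)
      = ∑ x : Fin n → Bool, ∑ bx : Bool, ∑ r : Fin n → Bool, ∑ br : Bool,
          ∑ z : Fin n → Bool, ∑ bz : Bool,
            G (Function.update x i bx) (Function.update r i br) (Function.update z i bz) := by
  have A : ∀ x r : Fin n → Bool, (2:ℝ) * ∑ z : Fin n → Bool, G x r z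
      = ∑ z : Fin n → Bool, ∑ bz : Bool, G x r (Function.update z i bz) :=
    fun x r => (sum_update_bool n i _).symm
  have B : ∀ x : Fin n → Bool,
      (2:ℝ) * ∑ r : Fin n → Bool, ∑ z : Fin n → Bool, ∑ bz : Bool,
          G x r (Function.update z i bz)
      = ∑ r : Fin n → Bool, ∑ br : Bool, ∑ z : Fin n → Bool, ∑ bz : Bool,
          G x (Function.update r i br) (Function.update z i bz) :=
    fun x => (sum_update_bool n i
      (fun r => ∑ z : Fin n → Bool, ∑ bz : Bool, G x r (Function.update z i bz))).symm
  calc 8 * (∑ x : Fin n → Bool, ∑ r : Fin n → Bool, ∑ z : Fin n → Bool, G x r z)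
      = 2 * ∑ x : Fin n → Bool, ∑ r : Fin n → Bool, 2 * (2 * ∑ z : Fin n → Bool, G x r z) := by
        simp only [Finset.mul_sum]
        refine Finset.sum_congr rfl fun x _ => Finset.sum_congr rfl fun r _ => ?_
        exact Finset.sum_congr rfl fun z _ => by ring
    _ = 2 * ∑ x : Fin n → Bool, ∑ r : Fin n → Bool,
          2 * ∑ z : Fin n → Bool, ∑ bz : Bool, G x r (Function.update z i bz) := by
        refine congrArg _ (Finset.sum_congr rfl fun x _ => Finset.sum_congr rfl fun r _ => ?_)
        rw [A x r]
    _ = 2 * ∑ x : Fin n → Bool, ∑ r : Fin n → Bool, ∑ br : Bool,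
          ∑ z : Fin n → Bool, ∑ bz : Bool,
            G x (Function.update r i br) (Function.update z i bz) := by
        refine congrArg _ (Finset.sum_congr rfl fun x _ => ?_)
        rw [← Finset.mul_sum, B x]
    _ = ∑ x : Fin n → Bool, ∑ bx : Bool, ∑ r : Fin n → Bool, ∑ br : Bool,
          ∑ z : Fin n → Bool, ∑ bz : Bool,
            G (Function.update x i bx) (Function.update r i br) (Function.update z i bz) :=
        (sum_update_bool n i
          (fun x => ∑ r : Fin n → Bool, ∑ br : Bool, ∑ z : Fin n → Bool, ∑ bz : Bool,
            G x (Function.update r i br) (Function.update z i bz))).symm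

/-- Correlation sum. -/
def Tcorr (n : ℕ) (p : ℝ) (g : (Fin n → Bool) → Bool) : ℝ :=
  ∑ x : Fin n → Bool, ∑ r : Fin n → Bool, ∑ z : Fin n → Bool,
    wt n p r * (toR (g x) * toR (g (noisy n x r z)))

lemma sum_wt_triple (n : ℕ) (p : ℝ) :
    ∑ x : Fin n → Bool, ∑ r : Fin n → Bool, ∑ z : Fin n → Bool, wt n p r
      = (2 ^ n * 2 ^ n : ℝ) := by
  have hz : ∀ r : Fin n → Bool, ∑ _z : Fin n → Bool, wt n p r = (2 ^ n : ℝ) * wt n p r := by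
    intro r
    rw [Finset.sum_const, Finset.card_univ]
    simp [mul_comm]
  have hcard : (Fintype.card (Fin n → Bool) : ℝ) = 2 ^ n := by simp
  calc ∑ x : Fin n → Bool, ∑ r : Fin n → Bool, ∑ _z : Fin n → Bool, wt n p r
      = ∑ _x : Fin n → Bool, ∑ r : Fin n → Bool, (2 ^ n : ℝ) * wt n p r := by
        refine Finset.sum_congr rfl fun x _ => Finset.sum_congr rfl fun r _ => ?_
        exact hz r
    _ = ∑ _x : Fin n → Bool, (2 ^ n : ℝ) := by
        refine Finset.sum_congr rfl fun x _ => ?_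
        rw [← Finset.mul_sum, sum_wt n p, mul_one]
    _ = (2 ^ n * 2 ^ n : ℝ) := by
        rw [Finset.sum_const, Finset.card_univ]
        simp [mul_comm]


lemma sum_swap_zbool (n : ℕ) (g : Bool → Bool → (Fin n → Bool) → Bool → ℝ) :
    ∑ bx : Bool, ∑ br : Bool, ∑ z : Fin n → Bool, ∑ bz : Bool, g bx br z bz
      = ∑ z : Fin n → Bool, ∑ bx : Bool, ∑ br : Bool, ∑ bz : Bool, g bx br z bz := by
  calc ∑ bx : Bool, ∑ br : Bool, ∑ z : Fin n → Bool, ∑ bz : Bool, g bx br z bz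
      = ∑ bx : Bool, ∑ z : Fin n → Bool, ∑ br : Bool, ∑ bz : Bool, g bx br z bz :=
        Finset.sum_congr rfl fun bx _ => Finset.sum_comm
    _ = ∑ z : Fin n → Bool, ∑ bx : Bool, ∑ br : Bool, ∑ bz : Bool, g bx br z bz :=
        Finset.sum_comm

lemma NS_eq (n : ℕ) (p : ℝ) (g : (Fin n → Bool) → Bool) :
    NS n p g = ((2 ^ n * 2 ^ n : ℝ) - Tcorr n p g) / (2 * (2 ^ n * 2 ^ n)) := by
  unfold NS Tcorr
  have pt : ∀ a b : Bool, (if a = b then (0:ℝ) else 1) = (1 - toR a * toR b) / 2 := by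
    intro a b; cases a <;> cases b <;> simp [toR] <;> norm_num
  have hnum : ∑ x : Fin n → Bool, ∑ r : Fin n → Bool, ∑ z : Fin n → Bool,
      wt n p r * (if g x = g (noisy n x r z) then (0:ℝ) else 1)
      = ((2 ^ n * 2 ^ n : ℝ)
          - ∑ x : Fin n → Bool, ∑ r : Fin n → Bool, ∑ z : Fin n → Bool,
              wt n p r * (toR (g x) * toR (g (noisy n x r z)))) / 2 := by
    calc ∑ x : Fin n → Bool, ∑ r : Fin n → Bool, ∑ z : Fin n → Bool,
        wt n p r * (if g x = g (noisy n x r z) then (0:ℝ) else 1)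
        = ∑ x : Fin n → Bool, ∑ r : Fin n → Bool, ∑ z : Fin n → Bool,
            (wt n p r / 2 - wt n p r * (toR (g x) * toR (g (noisy n x r z))) / 2) := by
          refine Finset.sum_congr rfl fun x _ => Finset.sum_congr rfl fun r _ =>
            Finset.sum_congr rfl fun z _ => ?_
          rw [pt]; ring
      _ = (∑ x : Fin n → Bool, ∑ r : Fin n → Bool, ∑ z : Fin n → Bool, wt n p r) / 2
          - (∑ x : Fin n → Bool, ∑ r : Fin n → Bool, ∑ z : Fin n → Bool,
              wt n p r * (toR (g x) * toR (g (noisy n x r z)))) / 2 := by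
          simp only [Finset.sum_sub_distrib, ← Finset.sum_div]
      _ = _ := by rw [sum_wt_triple n p]; ring
  rw [hnum]
  ring

lemma key_identity (n : ℕ) (p : ℝ) (f : (Fin n → Bool) → Bool) (i : Fin n) :
    Tcorr n p (restr n f i true) + Tcorr n p (restr n f i false) - 2 * Tcorr n p f
      = 2 * p * (∑ x : Fin n → Bool, ∑ r : Fin n → Bool, ∑ z : Fin n → Bool,
          wt n p r * (Dder n (fun y => toR (f y)) i x
            * Dder n (fun y => toR (f y)) i (noisy n x r z))) := by
  have hcomb : Tcorr n p (restr n f i true) + Tcorr n p (restr n f i false)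
      - 2 * Tcorr n p f
      - 2 * p * (∑ x : Fin n → Bool, ∑ r : Fin n → Bool, ∑ z : Fin n → Bool,
          wt n p r * (Dder n (fun y => toR (f y)) i x
            * Dder n (fun y => toR (f y)) i (noisy n x r z)))
      = ∑ x : Fin n → Bool, ∑ r : Fin n → Bool, ∑ z : Fin n → Bool,
          (wt n p r * (toR (f (Function.update x i true))
              * toR (f (Function.update (noisy n x r z) i true)))
            + wt n p r * (toR (f (Function.update x i false))
              * toR (f (Function.update (noisy n x r z) i false)))
            - 2 * (wt n p r * (toR (f x) * toR (f (noisy n x r z))))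
            - 2 * p * (wt n p r * (Dder n (fun y => toR (f y)) i x
                * Dder n (fun y => toR (f y)) i (noisy n x r z)))) := by
    unfold Tcorr
    simp only [restr]
    simp only [Finset.mul_sum]
    rw [← Finset.sum_add_distrib, ← Finset.sum_sub_distrib, ← Finset.sum_sub_distrib]
    refine Finset.sum_congr rfl fun x _ => ?_
    rw [← Finset.sum_add_distrib, ← Finset.sum_sub_distrib, ← Finset.sum_sub_distrib]
    refine Finset.sum_congr rfl fun r _ => ?_
    rw [← Finset.sum_add_distrib, ← Finset.sum_sub_distrib, ← Finset.sum_sub_distrib]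
  have h8 := expand3 n i (fun x r z =>
    wt n p r * (toR (f (Function.update x i true))
        * toR (f (Function.update (noisy n x r z) i true)))
      + wt n p r * (toR (f (Function.update x i false))
        * toR (f (Function.update (noisy n x r z) i false)))
      - 2 * (wt n p r * (toR (f x) * toR (f (noisy n x r z))))
      - 2 * p * (wt n p r * (Dder n (fun y => toR (f y)) i x
          * Dder n (fun y => toR (f y)) i (noisy n x r z))))
  have h0 : ∑ x : Fin n → Bool, ∑ bx : Bool, ∑ r : Fin n → Bool, ∑ br : Bool,
      ∑ z : Fin n → Bool, ∑ bz : Bool,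
        (fun x r z =>
          wt n p r * (toR (f (Function.update x i true))
              * toR (f (Function.update (noisy n x r z) i true)))
            + wt n p r * (toR (f (Function.update x i false))
              * toR (f (Function.update (noisy n x r z) i false)))
            - 2 * (wt n p r * (toR (f x) * toR (f (noisy n x r z))))
            - 2 * p * (wt n p r * (Dder n (fun y => toR (f y)) i x
                * Dder n (fun y => toR (f y)) i (noisy n x r z))))
          (Function.update x i bx) (Function.update r i br) (Function.update z i bz) = 0 := by
    refine Finset.sum_eq_zero fun x _ => ?_
    rw [Finset.sum_comm]
    refine Finset.sum_eq_zero fun r _ => ?_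
    rw [sum_swap_zbool]
    refine Finset.sum_eq_zero fun z _ => ?_
    simp only [Fintype.sum_bool, noisy_update, wt_update, Function.update_idem, Dder,
      Bool.cond_true, Bool.cond_false]
    ring
  rw [h0] at h8
  have : (8:ℝ) ≠ 0 := by norm_num
  have hz : Tcorr n p (restr n f i true) + Tcorr n p (restr n f i false)
      - 2 * Tcorr n p f
      - 2 * p * (∑ x : Fin n → Bool, ∑ r : Fin n → Bool, ∑ z : Fin n → Bool,
          wt n p r * (Dder n (fun y => toR (f y)) i x
            * Dder n (fun y => toR (f y)) i (noisy n x r z))) = 0 := by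
    rw [hcomb]
    nlinarith [h8]
  linarith [hz]

/-- `Score_i(f,p) = (p/2)·E_{x,y}[D_i f(x)·D_i f(y)]`,
`y` a `p`-noisy copy of `x`. -/
theorem stmt7 (n : ℕ) (p : ℝ) (hp0 : 0 < p) (hp1 : p < 1)
    (f : (Fin n → Bool) → Bool) (i : Fin n) :
    score n p f i =
      (p / 2) *
        ((∑ x : Fin n → Bool, ∑ r : Fin n → Bool, ∑ z : Fin n → Bool,
            wt n p r *
              (Dder n (fun y => toR (f y)) i x *
                Dder n (fun y => toR (f y)) i (noisy n x r z))) /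
          (2 ^ n * 2 ^ n)) := by
  have hM : ((2:ℝ) ^ n * 2 ^ n) ≠ 0 := by positivity
  have hp : p ≠ 0 := ne_of_gt hp0
  have hkey := key_identity n p f i
  have gen : ∀ (t t1 t0 q M : ℝ), M ≠ 0 → p ≠ 0 → t1 + t0 - 2 * t = 2 * p * q →
      (M - t) / (2 * M) - ((M - t1) / (2 * M) + (M - t0) / (2 * M)) / 2
        = p / 2 * (q / M) := by
    intro t t1 t0 q M hM0 hp0' hk
    field_simp
    linear_combination hk
  simp only [score]
  rw [NS_eq n p f, NS_eq n p (restr n f i true), NS_eq n p (restr n f i false)]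
  exact gen (Tcorr n p f) (Tcorr n p (restr n f i true)) (Tcorr n p (restr n f i false))
    _ (2 ^ n * 2 ^ n) hM hp hkey

end

end DTR
end

section
/- Let f : {-1,1}^n → {-1,1} be ε-close to a decision tree T of size s (at most s leaves). Then for all p ∈ (0,1): NS_p(f) ≤ p·log₂ s + 2ε. -/
open Finset

attribute [local instance] Classical.propDecidable

namespace DTR

noncomputable section

-- Auxiliary lemmas for stmt13

variable {n : ℕ}

lemma aux_sum_prod_bool (w : Fin n → Bool → ℝ) :
    ∑ r : Fin n → Bool, ∏ i, w i (r i) = ∏ i, (w i true + w i false) := by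
  rw [← Fintype.prod_sum]; simp

lemma aux_sum_wt (p : ℝ) : ∑ r : Fin n → Bool, wt n p r = 1 := by
  have := aux_sum_prod_bool (n := n) (fun i b => if b then p else 1 - p)
  simp only [wt]
  rw [this]; simp

lemma aux_wt_nonneg {p : ℝ} (hp0 : 0 ≤ p) (hp1 : p ≤ 1) (r : Fin n → Bool) : 0 ≤ wt n p r :=
  Finset.prod_nonneg fun i _ => by by_cases h : r i <;> simp [h] <;> linarith

lemma aux_sum_wt_coord (p : ℝ) (i : Fin n) :
    ∑ r : Fin n → Bool, wt n p r * (if r i then (1:ℝ) else 0) = p := by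
  set w : Fin n → Bool → ℝ :=
    fun j b => if j = i then (if b then p else 0) else (if b then p else 1 - p) with hw
  have key : ∀ r : Fin n → Bool, wt n p r * (if r i then (1:ℝ) else 0) = ∏ j, w j (r j) := by
    intro r
    rw [wt, mul_comm,
        ← Finset.mul_prod_erase univ (fun j => if r j then p else 1 - p) (mem_univ i),
        ← Finset.mul_prod_erase univ (fun j => w j (r j)) (mem_univ i),
        ← mul_assoc]
    congr 1
    · by_cases h : r i <;> simp [hw, h]
    · exact Finset.prod_congr rfl fun j hj => by simp [hw, (Finset.mem_erase.mp hj).1]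
  calc ∑ r : Fin n → Bool, wt n p r * (if r i then (1:ℝ) else 0)
      = ∑ r : Fin n → Bool, ∏ j, w j (r j) := Finset.sum_congr rfl fun r _ => key r
    _ = ∏ j, (w j true + w j false) := aux_sum_prod_bool w
    _ = p := by rw [Finset.prod_eq_single i] <;> simp +contextual [hw]

lemma aux_noisy_sum (r : Fin n → Bool) (g : (Fin n → Bool) → ℝ) :
    ∑ x : Fin n → Bool, ∑ z : Fin n → Bool, g (noisy n x r z)
      = 2^n * ∑ y : Fin n → Bool, g y := by
  have inv : Function.Involutive
      (fun q : (Fin n → Bool) × (Fin n → Bool) => (noisy n q.1 r q.2, noisy n q.2 r q.1)) := by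
    rintro ⟨x, z⟩
    simp only [Prod.mk.injEq]
    constructor <;> funext i <;> by_cases h : r i <;> simp [noisy, h]
  let e := inv.toPerm
  calc ∑ x : Fin n → Bool, ∑ z : Fin n → Bool, g (noisy n x r z)
      = ∑ q : (Fin n → Bool) × (Fin n → Bool), g ((e q).1) :=
        (Fintype.sum_prod_type fun q => g ((e q).1)).symm
    _ = ∑ q : (Fin n → Bool) × (Fin n → Bool), g q.1 := Equiv.sum_comp e fun q => g q.1
    _ = ∑ x : Fin n → Bool, ∑ _z : Fin n → Bool, g x := Fintype.sum_prod_type _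
    _ = 2^n * ∑ y : Fin n → Bool, g y := by
        simp [Finset.sum_const, Finset.mul_sum, mul_comm]

lemma aux_card_real : ((Fintype.card (Fin n → Bool) : ℝ)) = 2^n := by simp

lemma aux_sum_split (i : Fin n) (G H : (Fin n → Bool) → ℝ)
    (hG : ∀ x b, G (Function.update x i b) = G x)
    (hH : ∀ x b, H (Function.update x i b) = H x) :
    ∑ x : Fin n → Bool, (if x i then G x else H x)
      = (∑ x : Fin n → Bool, G x + ∑ x : Fin n → Bool, H x) / 2 := by
  have inv : Function.Involutive (fun x : Fin n → Bool => Function.update x i (!x i)) := by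
    intro x; funext j
    by_cases h : j = i
    · subst h; simp
    · simp [Function.update_of_ne h]
  let e := inv.toPerm
  have h1 : ∑ x : Fin n → Bool, (if x i then G x else H x)
      = ∑ x : Fin n → Bool, (if x i then H x else G x) := by
    calc ∑ x : Fin n → Bool, (if x i then G x else H x)
        = ∑ x : Fin n → Bool, (if (e x) i then G (e x) else H (e x)) :=
          (Equiv.sum_comp e fun x => if x i then G x else H x).symm
      _ = ∑ x : Fin n → Bool, (if x i then H x else G x) := by
          refine Finset.sum_congr rfl fun x _ => ?_
          have h2 : (e x) i = !(x i) := by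
            show Function.update x i (!x i) i = !(x i); simp
          have h3 : G (e x) = G x := hG x (!x i)
          have h4 : H (e x) = H x := hH x (!x i)
          rw [h2, h3, h4]; by_cases h : x i <;> simp [h]
  have h2 : (∑ x : Fin n → Bool, (if x i then G x else H x))
      + (∑ x : Fin n → Bool, (if x i then H x else G x))
      = ∑ x : Fin n → Bool, G x + ∑ x : Fin n → Bool, H x := by
    rw [← Finset.sum_add_distrib, ← Finset.sum_add_distrib]
    refine Finset.sum_congr rfl fun x _ => ?_
    by_cases h : x i <;> simp [h, add_comm]
  linarith

lemma aux_am_gm_logb {a b : ℝ} (ha : 1 ≤ a) (hb : 1 ≤ b) :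
    1 + (Real.logb 2 a + Real.logb 2 b) / 2 ≤ Real.logb 2 (a + b) := by
  have ha0 : (0:ℝ) < a := by linarith
  have hb0 : (0:ℝ) < b := by linarith
  have h1 : Real.logb 2 a + Real.logb 2 b = Real.logb 2 (a * b) :=
    (Real.logb_mul (ne_of_gt ha0) (ne_of_gt hb0)).symm
  have h2 : a * b ≤ ((a + b) / 2) ^ 2 := by nlinarith [sq_nonneg (a - b)]
  have h3 : Real.logb 2 (a * b) ≤ Real.logb 2 (((a + b) / 2) ^ 2) :=
    Real.logb_le_logb_of_le (by norm_num) (by positivity) h2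
  have h4 : Real.logb 2 (((a + b) / 2) ^ 2) = 2 * Real.logb 2 ((a + b) / 2) := by
    rw [Real.logb_pow]; push_cast; ring
  have h5 : Real.logb 2 ((a + b) / 2) = Real.logb 2 (a + b) - 1 := by
    rw [Real.logb_div (by linarith) (by norm_num), Real.logb_self_eq_one] <;> norm_num
  linarith

namespace DTree

lemma aux_leaves_pos (T : DTree n) : 1 ≤ T.leaves := by
  induction T with
  | leaf b => simp [leaves]
  | node i l r ihl ihr => simp [leaves]; omega

lemma aux_eval_ne (T : DTree n) :
    ∀ x y : Fin n → Bool, T.eval x ≠ T.eval y → ∃ i, T.queries x i = true ∧ x i ≠ y i := by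
  induction T with
  | leaf b => intro x y h; simp [eval] at h
  | node j l r ihl ihr =>
    intro x y h
    by_cases hxy : x j = y j
    · simp only [eval] at h
      rw [← hxy] at h
      cases hb : x j with
      | true =>
        rw [hb] at h; simp at h
        obtain ⟨i, hq, hne⟩ := ihr x y h
        exact ⟨i, by simp [queries, hb, hq], hne⟩
      | false =>
        rw [hb] at h; simp at h
        obtain ⟨i, hq, hne⟩ := ihl x y h
        exact ⟨i, by simp [queries, hb, hq], hne⟩
    · exact ⟨j, by simp [queries], hxy⟩

lemma aux_numQ_le_depthOn (T : DTree n) (x : Fin n → Bool) :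
    ∑ i : Fin n, (if T.queries x i then (1:ℝ) else 0) ≤ (T.depthOn x : ℝ) := by
  induction T with
  | leaf b => simp [queries, depthOn]
  | node j l r ihl ihr =>
    cases hb : x j with
    | true =>
      have step : ∀ i : Fin n, (if (node j l r).queries x i then (1:ℝ) else 0)
          ≤ (if i = j then (1:ℝ) else 0) + (if r.queries x i then (1:ℝ) else 0) := by
        intro i
        simp only [queries, hb]
        by_cases h1 : i = j <;> by_cases h2 : r.queries x i = true <;>
          simp [h1, h2] <;> (try split <;> norm_num)
      calc ∑ i : Fin n, (if (node j l r).queries x i then (1:ℝ) else 0)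
          ≤ ∑ i : Fin n, ((if i = j then (1:ℝ) else 0) + (if r.queries x i then (1:ℝ) else 0)) :=
            Finset.sum_le_sum fun i _ => step i
        _ = 1 + ∑ i : Fin n, (if r.queries x i then (1:ℝ) else 0) := by
            rw [Finset.sum_add_distrib]; simp
        _ ≤ 1 + (r.depthOn x : ℝ) := by linarith [ihr]
        _ = ((node j l r).depthOn x : ℝ) := by simp [depthOn, hb]; push_cast; ring
    | false =>
      have step : ∀ i : Fin n, (if (node j l r).queries x i then (1:ℝ) else 0)
          ≤ (if i = j then (1:ℝ) else 0) + (if l.queries x i then (1:ℝ) else 0) := by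
        intro i
        simp only [queries, hb]
        by_cases h1 : i = j <;> by_cases h2 : l.queries x i = true <;>
          simp [h1, h2] <;> (try split <;> norm_num)
      calc ∑ i : Fin n, (if (node j l r).queries x i then (1:ℝ) else 0)
          ≤ ∑ i : Fin n, ((if i = j then (1:ℝ) else 0) + (if l.queries x i then (1:ℝ) else 0)) :=
            Finset.sum_le_sum fun i _ => step i
        _ = 1 + ∑ i : Fin n, (if l.queries x i then (1:ℝ) else 0) := by
            rw [Finset.sum_add_distrib]; simp
        _ ≤ 1 + (l.depthOn x : ℝ) := by linarith [ihl]
        _ = ((node j l r).depthOn x : ℝ) := by simp [depthOn, hb]; push_cast; ring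

lemma aux_depthOn_update (T : DTree n) :
    ∀ (s : Finset (Fin n)), T.noRepeat s → ∀ i ∈ s, ∀ (x : Fin n → Bool) (b : Bool),
      T.depthOn (Function.update x i b) = T.depthOn x := by
  induction T with
  | leaf c => intro s _ i _ x b; rfl
  | node j l r ihl ihr =>
    intro s h i hi x b
    obtain ⟨hj, hl, hr⟩ := h
    have hne : j ≠ i := fun he => hj (he ▸ hi)
    simp only [depthOn, Function.update_of_ne hne]
    rw [ihl (insert j s) hl i (Finset.mem_insert_of_mem hi) x b,
        ihr (insert j s) hr i (Finset.mem_insert_of_mem hi) x b]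

end DTree


namespace DTree

def prune : DTree n → Finset (Fin n) → (Fin n → Bool) → DTree n
  | .leaf b, _, _ => .leaf b
  | .node i l r, s, v =>
    if i ∈ s then (if v i then prune r s v else prune l s v)
    else .node i (prune l (insert i s) (Function.update v i false))
                 (prune r (insert i s) (Function.update v i true))

lemma aux_prune_leaves (T : DTree n) :
    ∀ (s : Finset (Fin n)) (v : Fin n → Bool), (T.prune s v).leaves ≤ T.leaves := by
  induction T with
  | leaf b => intro s v; simp [prune]
  | node i l r ihl ihr =>
    intro s v
    by_cases hi : i ∈ s
    · by_cases hv : v i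
      · simp only [prune, hi, hv, if_true]
        have h1 := ihr s v
        have h2 := aux_leaves_pos l
        simp only [leaves]
        omega
      · simp only [prune, hi, hv, if_true, Bool.false_eq_true, if_false]
        have h1 := ihl s v
        have h2 := aux_leaves_pos r
        simp only [leaves]
        omega
    · simp only [prune, hi, if_false, leaves]
      exact Nat.add_le_add (ihl _ _) (ihr _ _)

lemma aux_prune_noRepeat (T : DTree n) :
    ∀ (s : Finset (Fin n)) (v : Fin n → Bool), (T.prune s v).noRepeat s := by
  induction T with
  | leaf b => intro s v; simp [prune, noRepeat]
  | node i l r ihl ihr =>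
    intro s v
    by_cases hi : i ∈ s
    · by_cases hv : v i <;> simp only [prune, hi, hv, if_true, if_false] <;>
        [exact ihr s v; exact ihl s v]
    · simp only [prune, hi, if_false]
      exact ⟨hi, ihl _ _, ihr _ _⟩

lemma aux_prune_eval (T : DTree n) :
    ∀ (s : Finset (Fin n)) (v x : Fin n → Bool), (∀ j ∈ s, x j = v j) →
      (T.prune s v).eval x = T.eval x := by
  induction T with
  | leaf b => intro s v x h; rfl
  | node i l r ihl ihr =>
    intro s v x h
    by_cases hi : i ∈ s
    · have hx : x i = v i := h i hi
      by_cases hv : v i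
      · simp only [prune, hi, hv, if_true, eval, hx]
        exact ihr s v x h
      · simp only [prune, hi, hv, if_true, if_false, eval, hx]
        simp only [Bool.false_eq_true, if_false]
        exact ihl s v x h
    · simp only [prune, hi, if_false, eval]
      cases hb : x i with
      | true =>
        simp only [if_true]
        refine ihr _ _ x fun j hj => ?_
        rcases Finset.mem_insert.mp hj with hj | hj
        · subst hj; simp [hb]
        · have : j ≠ i := fun he => hi (he ▸ hj)
          rw [Function.update_of_ne this]; exact h j hj
      | false =>
        simp only [Bool.false_eq_true, if_false]
        refine ihl _ _ x fun j hj => ?_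
        rcases Finset.mem_insert.mp hj with hj | hj
        · subst hj; simp [hb]
        · have : j ≠ i := fun he => hi (he ▸ hj)
          rw [Function.update_of_ne this]; exact h j hj

lemma aux_avgDepth_le (T : DTree n) :
    ∀ (s : Finset (Fin n)), T.noRepeat s →
      avg n (fun x => (T.depthOn x : ℝ)) ≤ Real.logb 2 (T.leaves : ℝ) := by
  induction T with
  | leaf b => intro s _; simp [avg, depthOn, leaves]
  | node i l r ihl ihr =>
    intro s h
    obtain ⟨hi, hl, hr⟩ := h
    have hGr : ∀ (x : Fin n → Bool) (b : Bool),
        ((r.depthOn (Function.update x i b) : ℝ)) = (r.depthOn x : ℝ) := fun x b => by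
      rw [aux_depthOn_update r (insert i s) hr i (Finset.mem_insert_self i s) x b]
    have hGl : ∀ (x : Fin n → Bool) (b : Bool),
        ((l.depthOn (Function.update x i b) : ℝ)) = (l.depthOn x : ℝ) := fun x b => by
      rw [aux_depthOn_update l (insert i s) hl i (Finset.mem_insert_self i s) x b]
    have hsplit := aux_sum_split i (fun x => (r.depthOn x : ℝ)) (fun x => (l.depthOn x : ℝ)) hGr hGl
    have h2n : (0:ℝ) < 2 ^ n := by positivity
    have hstep : avg n (fun x => ((node i l r).depthOn x : ℝ))
        = (avg n (fun x => (r.depthOn x : ℝ)) + avg n (fun x => (l.depthOn x : ℝ))) / 2 + 1 := by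
      unfold avg
      rw [show (∑ x : Fin n → Bool, (((node i l r).depthOn x : ℕ) : ℝ))
          = ∑ x : Fin n → Bool, ((if x i then (r.depthOn x : ℝ) else (l.depthOn x : ℝ)) + 1) by
        refine Finset.sum_congr rfl fun x _ => ?_
        cases hb : x i <;> simp [depthOn, hb]]
      rw [Finset.sum_add_distrib, hsplit]
      simp only [Finset.sum_const, Finset.card_univ, nsmul_eq_mul, mul_one]
      have hcard : ((Fintype.card (Fin n → Bool) : ℝ)) = 2 ^ n := by simp
      rw [hcard]
      have hgen : ∀ B C D : ℝ, D ≠ 0 → ((B + C) / 2 + D) / D = (B / D + C / D) / 2 + 1 := by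
        intros B C D hD; field_simp
      exact hgen _ _ _ h2n.ne'
    have hla : (1:ℝ) ≤ (l.leaves : ℝ) := by exact_mod_cast aux_leaves_pos l
    have hra : (1:ℝ) ≤ (r.leaves : ℝ) := by exact_mod_cast aux_leaves_pos r
    have hgm := aux_am_gm_logb hla hra
    have hleaves : ((node i l r).leaves : ℝ) = (l.leaves : ℝ) + (r.leaves : ℝ) := by
      simp [leaves]
    rw [hstep, hleaves]
    have h1 := ihr _ hr
    have h2 := ihl _ hl
    linarith

end DTree


lemma aux_sum3_dx (p : ℝ) (d : (Fin n → Bool) → ℝ) :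
    ∑ x : Fin n → Bool, ∑ r : Fin n → Bool, ∑ z : Fin n → Bool, wt n p r * d x
      = 2^n * ∑ x : Fin n → Bool, d x := by
  have h1 : ∀ x : Fin n → Bool, (∑ r : Fin n → Bool, ∑ z : Fin n → Bool, wt n p r * d x)
      = 2^n * d x := by
    intro x
    calc ∑ r : Fin n → Bool, ∑ z : Fin n → Bool, wt n p r * d x
        = ∑ r : Fin n → Bool, (2^n : ℝ) * (wt n p r * d x) := by
          refine Finset.sum_congr rfl fun r _ => ?_
          rw [Finset.sum_const, Finset.card_univ, nsmul_eq_mul, aux_card_real]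
      _ = (2^n : ℝ) * ((∑ r : Fin n → Bool, wt n p r) * d x) := by
          rw [← Finset.mul_sum, ← Finset.sum_mul]
      _ = 2^n * d x := by rw [aux_sum_wt]; ring
  rw [Finset.sum_congr rfl fun x _ => h1 x, ← Finset.mul_sum]

lemma aux_sum3_dy (p : ℝ) (d : (Fin n → Bool) → ℝ) :
    ∑ x : Fin n → Bool, ∑ r : Fin n → Bool, ∑ z : Fin n → Bool, wt n p r * d (noisy n x r z)
      = 2^n * ∑ y : Fin n → Bool, d y := by
  rw [Finset.sum_comm]
  have h1 : ∀ r : Fin n → Bool,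
      (∑ x : Fin n → Bool, ∑ z : Fin n → Bool, wt n p r * d (noisy n x r z))
      = wt n p r * (2^n * ∑ y : Fin n → Bool, d y) := by
    intro r
    calc ∑ x : Fin n → Bool, ∑ z : Fin n → Bool, wt n p r * d (noisy n x r z)
        = wt n p r * ∑ x : Fin n → Bool, ∑ z : Fin n → Bool, d (noisy n x r z) := by
          rw [Finset.mul_sum]
          exact Finset.sum_congr rfl fun x _ => (Finset.mul_sum _ _ _).symm
      _ = wt n p r * (2^n * ∑ y : Fin n → Bool, d y) := by rw [aux_noisy_sum]
  rw [Finset.sum_congr rfl fun r _ => h1 r, ← Finset.sum_mul, aux_sum_wt, one_mul]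

lemma aux_NS_triangle {p : ℝ} (hp0 : 0 ≤ p) (hp1 : p ≤ 1) (f g : (Fin n → Bool) → Bool) :
    NS n p f ≤ NS n p g + 2 * distB n f g := by
  set d : (Fin n → Bool) → ℝ := fun x => if f x = g x then 0 else 1 with hd
  have hdnn : ∀ x, 0 ≤ d x := fun x => by by_cases h : f x = g x <;> simp [hd, h]
  have hpt : ∀ x r z : Fin n → Bool,
      wt n p r * (if f x = f (noisy n x r z) then (0:ℝ) else 1)
      ≤ wt n p r * (if g x = g (noisy n x r z) then (0:ℝ) else 1)
        + wt n p r * d x + wt n p r * d (noisy n x r z) := by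
    intro x r z
    have hw := aux_wt_nonneg hp0 hp1 r
    set y := noisy n x r z with hy
    have e1nn : (0:ℝ) ≤ (if g x = g y then (0:ℝ) else 1) := by split <;> norm_num
    have hmain : (if f x = f y then (0:ℝ) else 1)
        ≤ (if g x = g y then (0:ℝ) else 1) + d x + d y := by
      by_cases h1 : f x = f y
      · rw [if_pos h1]
        have := hdnn x; have := hdnn y; linarith [e1nn]
      · rw [if_neg h1]
        by_cases h2 : g x = g y
        · by_cases h3 : f x = g x
          · have h4 : f y ≠ g y := fun h4 => h1 (by rw [h3, h2, ← h4])
            have hdy : d y = 1 := by simp [hd, h4]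
            have := hdnn x; rw [if_pos h2]; linarith
          · have hdx : d x = 1 := by simp [hd, h3]
            have := hdnn y; rw [if_pos h2]; linarith
        · have := hdnn x; have := hdnn y
          rw [if_neg h2]; linarith
    calc wt n p r * (if f x = f y then (0:ℝ) else 1)
        ≤ wt n p r * ((if g x = g y then (0:ℝ) else 1) + d x + d y) :=
          mul_le_mul_of_nonneg_left hmain hw
      _ = _ := by ring
  have hsum : (∑ x : Fin n → Bool, ∑ r : Fin n → Bool, ∑ z : Fin n → Bool,
        wt n p r * (if f x = f (noisy n x r z) then (0:ℝ) else 1))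
      ≤ (∑ x : Fin n → Bool, ∑ r : Fin n → Bool, ∑ z : Fin n → Bool,
        wt n p r * (if g x = g (noisy n x r z) then (0:ℝ) else 1))
        + 2^n * ∑ x : Fin n → Bool, d x + 2^n * ∑ x : Fin n → Bool, d x := by
    calc (∑ x : Fin n → Bool, ∑ r : Fin n → Bool, ∑ z : Fin n → Bool,
        wt n p r * (if f x = f (noisy n x r z) then (0:ℝ) else 1))
        ≤ ∑ x : Fin n → Bool, ∑ r : Fin n → Bool, ∑ z : Fin n → Bool,
          (wt n p r * (if g x = g (noisy n x r z) then (0:ℝ) else 1)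
            + wt n p r * d x + wt n p r * d (noisy n x r z)) := by
          refine Finset.sum_le_sum fun x _ => Finset.sum_le_sum fun r _ =>
            Finset.sum_le_sum fun z _ => hpt x r z
      _ = (∑ x : Fin n → Bool, ∑ r : Fin n → Bool, ∑ z : Fin n → Bool,
            wt n p r * (if g x = g (noisy n x r z) then (0:ℝ) else 1))
          + (∑ x : Fin n → Bool, ∑ r : Fin n → Bool, ∑ z : Fin n → Bool, wt n p r * d x)
          + (∑ x : Fin n → Bool, ∑ r : Fin n → Bool, ∑ z : Fin n → Bool,
            wt n p r * d (noisy n x r z)) := by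
          simp only [Finset.sum_add_distrib]
      _ = _ := by rw [aux_sum3_dx, aux_sum3_dy]
  have h2n : (0:ℝ) < 2^n := by positivity
  have hD : (0:ℝ) < 2^n * 2^n := by positivity
  have hdist : distB n f g = (∑ x : Fin n → Bool, d x) / 2^n := rfl
  calc NS n p f = (∑ x : Fin n → Bool, ∑ r : Fin n → Bool, ∑ z : Fin n → Bool,
        wt n p r * (if f x = f (noisy n x r z) then (0:ℝ) else 1)) / (2^n * 2^n) := rfl
    _ ≤ ((∑ x : Fin n → Bool, ∑ r : Fin n → Bool, ∑ z : Fin n → Bool,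
        wt n p r * (if g x = g (noisy n x r z) then (0:ℝ) else 1))
        + 2^n * ∑ x : Fin n → Bool, d x + 2^n * ∑ x : Fin n → Bool, d x) / (2^n * 2^n) :=
        (div_le_div_iff_of_pos_right hD).mpr hsum
    _ = NS n p g + 2 * distB n f g := by
        rw [hdist]
        have hg : NS n p g = (∑ x : Fin n → Bool, ∑ r : Fin n → Bool, ∑ z : Fin n → Bool,
          wt n p r * (if g x = g (noisy n x r z) then (0:ℝ) else 1)) / (2^n * 2^n) := rfl
        rw [hg, add_div, add_div, mul_div_mul_left _ _ (ne_of_gt h2n)]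
        ring


lemma aux_NS_tree_le {p : ℝ} (hp0 : 0 ≤ p) (hp1 : p ≤ 1) (T : DTree n) :
    NS n p T.eval ≤ p * avg n (fun x => (T.depthOn x : ℝ)) := by
  set Q : (Fin n → Bool) → ℝ := fun x => ∑ i : Fin n, (if T.queries x i then (1:ℝ) else 0) with hQ
  have hpt : ∀ x r z : Fin n → Bool,
      wt n p r * (if T.eval x = T.eval (noisy n x r z) then (0:ℝ) else 1)
      ≤ wt n p r * ∑ i : Fin n,
          (if T.queries x i then (1:ℝ) else 0) * (if r i then (1:ℝ) else 0) := by
    intro x r z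
    refine mul_le_mul_of_nonneg_left ?_ (aux_wt_nonneg hp0 hp1 r)
    have hnn : ∀ i : Fin n, (0:ℝ) ≤ (if T.queries x i then (1:ℝ) else 0) * (if r i then (1:ℝ) else 0) :=
      fun i => mul_nonneg (by split <;> norm_num) (by split <;> norm_num)
    by_cases h : T.eval x = T.eval (noisy n x r z)
    · rw [if_pos h]
      exact Finset.sum_nonneg fun i _ => hnn i
    · rw [if_neg h]
      obtain ⟨i, hq, hne⟩ := DTree.aux_eval_ne T x (noisy n x r z) h
      have hri : r i = true := by
        by_contra hri
        apply hne
        simp [noisy, hri]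
      have h1 : (if T.queries x i then (1:ℝ) else 0) * (if r i then (1:ℝ) else 0) = 1 := by
        simp [hq, hri]
      calc (1:ℝ) = (if T.queries x i then (1:ℝ) else 0) * (if r i then (1:ℝ) else 0) := h1.symm
        _ ≤ ∑ i : Fin n, (if T.queries x i then (1:ℝ) else 0) * (if r i then (1:ℝ) else 0) :=
          Finset.single_le_sum (fun j _ => hnn j) (Finset.mem_univ i)
  have hrQ : ∀ x r : Fin n → Bool,
      (wt n p r * ∑ i : Fin n,
          (if T.queries x i then (1:ℝ) else 0) * (if r i then (1:ℝ) else 0))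
      = ∑ i : Fin n, (if T.queries x i then (1:ℝ) else 0) * (wt n p r * (if r i then (1:ℝ) else 0)) := by
    intro x r
    rw [Finset.mul_sum]
    exact Finset.sum_congr rfl fun i _ => by ring
  have hsumr : ∀ x : Fin n → Bool,
      (∑ r : Fin n → Bool, wt n p r * ∑ i : Fin n,
          (if T.queries x i then (1:ℝ) else 0) * (if r i then (1:ℝ) else 0))
      = p * Q x := by
    intro x
    rw [Finset.sum_congr rfl fun r _ => hrQ x r, Finset.sum_comm]
    have : ∀ i : Fin n, (∑ r : Fin n → Bool,
        (if T.queries x i then (1:ℝ) else 0) * (wt n p r * (if r i then (1:ℝ) else 0)))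
        = (if T.queries x i then (1:ℝ) else 0) * p := by
      intro i
      rw [← Finset.mul_sum, aux_sum_wt_coord]
    rw [Finset.sum_congr rfl fun i _ => this i, ← Finset.sum_mul]
    rw [hQ]; ring
  have h2n : (0:ℝ) < 2^n := by positivity
  have hD : (0:ℝ) < 2^n * 2^n := by positivity
  have hsum : (∑ x : Fin n → Bool, ∑ r : Fin n → Bool, ∑ z : Fin n → Bool,
        wt n p r * (if T.eval x = T.eval (noisy n x r z) then (0:ℝ) else 1))
      ≤ 2^n * (p * ∑ x : Fin n → Bool, Q x) := by
    calc (∑ x : Fin n → Bool, ∑ r : Fin n → Bool, ∑ z : Fin n → Bool,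
        wt n p r * (if T.eval x = T.eval (noisy n x r z) then (0:ℝ) else 1))
        ≤ ∑ x : Fin n → Bool, ∑ r : Fin n → Bool, ∑ z : Fin n → Bool,
          wt n p r * ∑ i : Fin n,
            (if T.queries x i then (1:ℝ) else 0) * (if r i then (1:ℝ) else 0) := by
          refine Finset.sum_le_sum fun x _ => Finset.sum_le_sum fun r _ =>
            Finset.sum_le_sum fun z _ => hpt x r z
      _ = ∑ x : Fin n → Bool, (2^n : ℝ) * ∑ r : Fin n → Bool,
            wt n p r * ∑ i : Fin n,
            (if T.queries x i then (1:ℝ) else 0) * (if r i then (1:ℝ) else 0) := by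
          refine Finset.sum_congr rfl fun x _ => ?_
          rw [Finset.mul_sum]
          refine Finset.sum_congr rfl fun r _ => ?_
          rw [Finset.sum_const, Finset.card_univ, nsmul_eq_mul, aux_card_real]
      _ = ∑ x : Fin n → Bool, (2^n : ℝ) * (p * Q x) := by
          refine Finset.sum_congr rfl fun x _ => by rw [hsumr x]
      _ = 2^n * (p * ∑ x : Fin n → Bool, Q x) := by
          rw [← Finset.mul_sum, ← Finset.mul_sum]
  have hQd : ∀ x : Fin n → Bool, Q x ≤ (T.depthOn x : ℝ) := fun x => DTree.aux_numQ_le_depthOn T x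
  calc NS n p T.eval
      = (∑ x : Fin n → Bool, ∑ r : Fin n → Bool, ∑ z : Fin n → Bool,
        wt n p r * (if T.eval x = T.eval (noisy n x r z) then (0:ℝ) else 1)) / (2^n * 2^n) := rfl
    _ ≤ (2^n * (p * ∑ x : Fin n → Bool, Q x)) / (2^n * 2^n) := (div_le_div_iff_of_pos_right hD).mpr hsum
    _ = p * ((∑ x : Fin n → Bool, Q x) / 2^n) := by
        rw [mul_div_mul_left _ _ (ne_of_gt h2n)]
        ring
    _ ≤ p * ((∑ x : Fin n → Bool, (T.depthOn x : ℝ)) / 2^n) := by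
        have : (∑ x : Fin n → Bool, Q x) ≤ ∑ x : Fin n → Bool, (T.depthOn x : ℝ) :=
          Finset.sum_le_sum fun x _ => hQd x
        have h1 : (∑ x : Fin n → Bool, Q x) / 2^n ≤ (∑ x : Fin n → Bool, (T.depthOn x : ℝ)) / 2^n :=
          (div_le_div_iff_of_pos_right h2n).mpr this
        exact mul_le_mul_of_nonneg_left h1 hp0
    _ = p * avg n (fun x => (T.depthOn x : ℝ)) := rfl


/-- if `f` is `ε`-close to a decision tree with at most `s` leaves then
`NS_p(f) ≤ p·log₂ s + 2ε`. -/
theorem stmt13 (n s : ℕ) (p ε : ℝ) (hp0 : 0 < p) (hp1 : p < 1)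
    (f : (Fin n → Bool) → Bool) (T : DTree n) (hs : T.leaves ≤ s)
    (hclose : distB n f T.eval ≤ ε) :
    NS n p f ≤ p * Real.logb 2 s + 2 * ε := by
  have hp0' : (0:ℝ) ≤ p := le_of_lt hp0
  have hp1' : p ≤ 1 := le_of_lt hp1
  set T' := T.prune ∅ (fun _ => false) with hT'
  have hev : T'.eval = T.eval := funext fun x => DTree.aux_prune_eval T ∅ _ x (by simp)
  have htri := aux_NS_triangle hp0' hp1' f T.eval
  have h1 : NS n p T.eval ≤ p * avg n (fun x => (T'.depthOn x : ℝ)) := by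
    rw [← hev]; exact aux_NS_tree_le hp0' hp1' T'
  have h2 : avg n (fun x => (T'.depthOn x : ℝ)) ≤ Real.logb 2 (T'.leaves : ℝ) :=
    DTree.aux_avgDepth_le T' ∅ (DTree.aux_prune_noRepeat T ∅ _)
  have hs1 : 1 ≤ T'.leaves := DTree.aux_leaves_pos T'
  have hs1' : (1:ℝ) ≤ (T'.leaves : ℝ) := by exact_mod_cast hs1
  have hs2 : T'.leaves ≤ s := le_trans (DTree.aux_prune_leaves T ∅ _) hs
  have hs2' : ((T'.leaves : ℝ)) ≤ (s : ℝ) := by exact_mod_cast hs2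
  have h3 : Real.logb 2 (T'.leaves : ℝ) ≤ Real.logb 2 (s : ℝ) :=
    Real.logb_le_logb_of_le (by norm_num) (by linarith) hs2'
  have hm1 : p * avg n (fun x => (T'.depthOn x : ℝ)) ≤ p * Real.logb 2 (T'.leaves : ℝ) :=
    mul_le_mul_of_nonneg_left h2 hp0'
  have hm2 : p * Real.logb 2 (T'.leaves : ℝ) ≤ p * Real.logb 2 (s : ℝ) :=
    mul_le_mul_of_nonneg_left h3 hp0'
  linarith

end

end DTR
end
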